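/- Let X be an n×k real matrix of rank k, Ω an n×n positive definite matrix, and K a k×k positive definite matrix. Then K X^T (Ω + X K X^T)^{-1} = K X^T (I_n + X K X^T)^{-1} holds if and only if Ω X = X, which in turn is equivalent to Ω having the form Ω = X (X^T X)^{-1} X^T + Z Δ Z^T for some positive definite (n−k)×(n−k) matrix Δ, where Z is any n×(n−k) matrix with X^T Z = 0 and rank(Z) = n−k. -/

import Mathlib

open Matrix

private lemma mulVec_inj_of_rank {m p : ℕ} (A : Matrix (Fin m) (Fin p) ℝ) (hA : A.rank = p) :
    Function.Injective A.mulVec := by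
  have h2 := A.mulVecLin.finrank_range_add_finrank_ker
  rw [show Matrix.rank A = Module.finrank ℝ (LinearMap.range A.mulVecLin) from rfl] at hA
  rw [hA, Module.finrank_pi, Fintype.card_fin] at h2
  have hker : Module.finrank ℝ (LinearMap.ker A.mulVecLin) = 0 := by omega
  have hbot : LinearMap.ker A.mulVecLin = ⊥ := Submodule.finrank_eq_zero.mp hker
  intro x y hxy
  exact LinearMap.ker_eq_bot.mp hbot (by simpa [Matrix.mulVecLin_apply] using hxy)

private lemma posdef_conj {m p : ℕ} {A : Matrix (Fin m) (Fin m) ℝ} (hA : A.PosDef)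
    (B : Matrix (Fin m) (Fin p) ℝ) (hB : Function.Injective B.mulVec) :
    (Bᵀ * A * B).PosDef := by
  have h : Bᴴ = Bᵀ := Matrix.conjTranspose_eq_transpose_of_trivial B
  rw [Matrix.posDef_iff_dotProduct_mulVec]
  constructor
  · rw [← h]; exact Matrix.isHermitian_conjTranspose_mul_mul B hA.isHermitian
  · intro x hx
    have hBx : B *ᵥ x ≠ 0 := by
      intro hc
      exact hx (hB (by simpa using hc))
    have := hA.dotProduct_mulVec_pos hBx
    rw [← h]
    simpa only [star_mulVec, Matrix.dotProduct_mulVec, Matrix.vecMul_vecMul] using this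

private lemma posdef_symm {p : ℕ} {M : Matrix (Fin p) (Fin p) ℝ} (hM : M.PosDef) : Mᵀ = M := by
  rw [← Matrix.conjTranspose_eq_transpose_of_trivial]; exact hM.isHermitian

theorem stmt_12 {n k : ℕ} (hnk : k < n)
    (X : Matrix (Fin n) (Fin k) ℝ) (hX : X.rank = k)
    (Z : Matrix (Fin n) (Fin (n - k)) ℝ) (hXZ : Xᵀ * Z = 0) (hZ : Z.rank = n - k)
    (Ω : Matrix (Fin n) (Fin n) ℝ) (hΩ : Ω.PosDef)
    (K : Matrix (Fin k) (Fin k) ℝ) (hK : K.PosDef) :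
    (K * Xᵀ * (Ω + X * K * Xᵀ)⁻¹ = K * Xᵀ * (1 + X * K * Xᵀ)⁻¹ ↔ Ω * X = X) ∧
    (Ω * X = X ↔
      ∃ Δ : Matrix (Fin (n - k)) (Fin (n - k)) ℝ, Δ.PosDef ∧
        Ω = X * (Xᵀ * X)⁻¹ * Xᵀ + Z * Δ * Zᵀ) := by
  classical
  have hΩs : Ωᵀ = Ω := posdef_symm hΩ
  have hXinj : Function.Injective X.mulVec := mulVec_inj_of_rank X hX
  have hZinj : Function.Injective Z.mulVec := mulVec_inj_of_rank Z hZ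
  have hXtX : (Xᵀ * X).PosDef := by
    simpa using posdef_conj Matrix.PosDef.one X hXinj
  have hZtZ : (Zᵀ * Z).PosDef := by
    simpa using posdef_conj Matrix.PosDef.one Z hZinj
  have hKd : IsUnit K.det := hK.det_pos.ne'.isUnit
  have hXtXd : IsUnit (Xᵀ * X).det := hXtX.det_pos.ne'.isUnit
  have hZtZd : IsUnit (Zᵀ * Z).det := hZtZ.det_pos.ne'.isUnit
  have hXX1 : (Xᵀ * X)⁻¹ * (Xᵀ * X) = 1 := Matrix.nonsing_inv_mul _ hXtXd
  have hZZ1 : (Zᵀ * Z)⁻¹ * (Zᵀ * Z) = 1 := Matrix.nonsing_inv_mul _ hZtZd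
  have hZX : Zᵀ * X = 0 := by
    have := congrArg Matrix.transpose hXZ
    simpa [Matrix.transpose_mul] using this
  -- abbreviations
  set A := Ω + X * K * Xᵀ with hAdef
  set B := (1 : Matrix (Fin n) (Fin n) ℝ) + X * K * Xᵀ with hBdef
  set C := (1 : Matrix (Fin k) (Fin k) ℝ) + K * (Xᵀ * X) with hCdef
  have hXKX : (X * K * Xᵀ).PosSemidef := by
    have := hK.posSemidef.mul_mul_conjTranspose_same X
    rwa [Matrix.conjTranspose_eq_transpose_of_trivial] at this
  have hApd : A.PosDef := hΩ.add_posSemidef hXKX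
  have hBpd : B.PosDef := Matrix.PosDef.one.add_posSemidef hXKX
  have hAd : IsUnit A.det := hApd.det_pos.ne'.isUnit
  have hBd : IsUnit B.det := hBpd.det_pos.ne'.isUnit
  have hCd : IsUnit C.det := by
    have hC : C = K * (K⁻¹ + Xᵀ * X) := by
      rw [hCdef, Matrix.mul_add, Matrix.mul_nonsing_inv _ hKd]
    have hCpd : (K⁻¹ + Xᵀ * X).PosDef := hK.inv.add hXtX
    rw [hC, Matrix.det_mul]
    exact hKd.mul hCpd.det_pos.ne'.isUnit
  have hAs : Aᵀ = A := posdef_symm hApd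
  have hBs : Bᵀ = B := posdef_symm hBpd
  have hBXC : B * X = X * C := by
    rw [hBdef, hCdef]
    simp [Matrix.add_mul, Matrix.mul_add, Matrix.mul_assoc]
  have hBinvX : B⁻¹ * X = X * C⁻¹ := by
    have h1 : B⁻¹ * (B * X) * C⁻¹ = X * C⁻¹ := by
      rw [Matrix.nonsing_inv_mul_cancel_left _ _ hBd]
    rw [hBXC, Matrix.mul_assoc, Matrix.mul_nonsing_inv_cancel_right _ _ hCd] at h1
    exact h1
  -- part 1
  have part1 : K * Xᵀ * A⁻¹ = K * Xᵀ * B⁻¹ ↔ Ω * X = X := by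
    constructor
    · intro h
      have h2 : Xᵀ * A⁻¹ = Xᵀ * B⁻¹ := by
        have := congrArg (fun M => K⁻¹ * M) h
        simpa [Matrix.mul_assoc, Matrix.nonsing_inv_mul_cancel_left _ _ hKd] using this
      have h3 : A⁻¹ * X = B⁻¹ * X := by
        have := congrArg Matrix.transpose h2
        simpa [Matrix.transpose_mul, Matrix.transpose_nonsing_inv, hAs, hBs] using this
      have h4 : A * (X * C⁻¹) = X := by
        rw [← hBinvX, ← h3, Matrix.mul_nonsing_inv_cancel_left _ _ hAd]
      have h5 : A * X = X * C := by
        have := congrArg (fun M => M * C) h4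
        simpa [Matrix.mul_assoc, Matrix.nonsing_inv_mul _ hCd] using this
      have h6 : A * X = B * X := by rw [h5, hBXC]
      rw [hAdef, hBdef, Matrix.add_mul, Matrix.add_mul, Matrix.one_mul] at h6
      exact add_right_cancel h6
    · intro hΩX
      have hAX : A * X = B * X := by
        rw [hAdef, hBdef, Matrix.add_mul, Matrix.add_mul, hΩX, Matrix.one_mul]
      have hAXC : A * X = X * C := by rw [hAX, hBXC]
      have hAinvX : A⁻¹ * X = X * C⁻¹ := by
        have h1 : A⁻¹ * (A * X) * C⁻¹ = X * C⁻¹ := by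
          rw [Matrix.nonsing_inv_mul_cancel_left _ _ hAd]
        rw [hAXC, Matrix.mul_assoc, Matrix.mul_nonsing_inv_cancel_right _ _ hCd] at h1
        exact h1
      have h3 : A⁻¹ * X = B⁻¹ * X := by rw [hAinvX, hBinvX]
      have h2 : Xᵀ * A⁻¹ = Xᵀ * B⁻¹ := by
        have := congrArg Matrix.transpose h3
        simpa [Matrix.transpose_mul, Matrix.transpose_nonsing_inv, hAs, hBs] using this
      rw [Matrix.mul_assoc, Matrix.mul_assoc, h2]
  refine ⟨part1, ?_⟩
  -- part 2
  set P := X * (Xᵀ * X)⁻¹ * Xᵀ with hPdef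
  set Q := Z * (Zᵀ * Z)⁻¹ * Zᵀ with hQdef
  have hPQ1 : P + Q = 1 := by
    have e : Fin n ≃ Fin k ⊕ Fin (n - k) :=
      (finCongr (Nat.add_sub_cancel' hnk.le).symm).trans finSumFinEquiv.symm
    have hRW : Matrix.fromRows ((Xᵀ * X)⁻¹ * Xᵀ) ((Zᵀ * Z)⁻¹ * Zᵀ) * Matrix.fromCols X Z
        = 1 := by
      rw [Matrix.fromRows_mul_fromCols]
      rw [Matrix.mul_assoc, Matrix.mul_assoc, Matrix.mul_assoc, Matrix.mul_assoc,
        hXZ, hZX, hXX1, hZZ1]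
      simp [Matrix.fromBlocks_one]
    have hWR := (Matrix.fromCols_mul_fromRows_eq_one_comm e X Z _ _).mpr hRW
    rw [Matrix.fromCols_mul_fromRows] at hWR
    rw [hPdef, hQdef, Matrix.mul_assoc, Matrix.mul_assoc]
    exact hWR
  have hPs : Pᵀ = P := by
    rw [hPdef]
    simp [Matrix.transpose_mul, Matrix.transpose_nonsing_inv, Matrix.mul_assoc]
  have hPP : P * P = P := by
    rw [hPdef]
    simp only [Matrix.mul_assoc]
    rw [← Matrix.mul_assoc Xᵀ X, Matrix.nonsing_inv_mul_cancel_left _ _ hXtXd]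
  constructor
  · intro hΩX
    have hΩP : Ω * P = P := by
      rw [hPdef, ← Matrix.mul_assoc, ← Matrix.mul_assoc, hΩX]
    have hPΩ : P * Ω = P := by
      have := congrArg Matrix.transpose hΩP
      rwa [Matrix.transpose_mul, hΩs, hPs] at this
    set M := (Zᵀ * Z)⁻¹ with hMdef
    have hMs : Mᵀ = M := by
      rw [hMdef, Matrix.transpose_nonsing_inv]
      congr 1
      simp [Matrix.transpose_mul]
    have hMinj : Function.Injective M.mulVec :=
      Matrix.mulVec_injective_iff_isUnit.mpr hZtZ.inv.isUnit
    refine ⟨M * (Zᵀ * Ω * Z) * M, ?_, ?_⟩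
    · have := posdef_conj (posdef_conj hΩ Z hZinj) M hMinj
      rwa [hMs] at this
    · have hQe : Q = 1 - P := by rw [← hPQ1]; abel
      have key : Z * (M * (Zᵀ * Ω * Z) * M) * Zᵀ = Q * Ω * Q := by
        rw [hQdef, hMdef]
        simp [Matrix.mul_assoc]
      rw [key, hQe]
      simp only [Matrix.sub_mul, Matrix.mul_sub, Matrix.one_mul, Matrix.mul_one, hPΩ, hΩP, hPP]
      abel
  · rintro ⟨Δ, hΔ, hΩeq⟩
    have h1 : P * X = X := by
      rw [hPdef, Matrix.mul_assoc, Matrix.mul_assoc, Matrix.nonsing_inv_mul _ hXtXd,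
        Matrix.mul_one]
    have h2 : Z * Δ * Zᵀ * X = 0 := by
      rw [Matrix.mul_assoc, hZX, Matrix.mul_zero]
    rw [hΩeq, Matrix.add_mul, h1, h2, add_zero]
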